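/- arXiv:2404.01003 — 2 statements merged into one kernel-verified Lean document; each statement's English description precedes it below -/
import Mathlib

section
/- Let q and N be positive integers and let α : ℤ → ℂ be supported on the integers n with N < n ≤ 2N. Then ∑_{χ mod q} |∑_{n} α(n) χ(n)|² ≤ (N + q) · ∑_n |α(n)|², where the sum runs over all Dirichlet characters modulo q. -/
open Finset Complex

/-- Counting lemma: an interval of length `N` contains at most `N/q + 1` integers in a fixed
residue class mod `q`. -/
lemma residue_count_le (q N : ℕ) (hq : 0 < q) (a : ZMod q) :
    ((Finset.Ioc (N : ℤ) (2 * N)).filter (fun n : ℤ => (n : ZMod q) = a)).card ≤ N / q + 1 := by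
  classical
  set F := (Finset.Ioc (N : ℤ) (2 * N)).filter (fun n : ℤ => (n : ZMod q) = a) with hF
  have key : ∀ n ∈ F, ∀ m ∈ F, n < m →
      (n - ((N : ℤ) + 1)).toNat / q < (m - ((N : ℤ) + 1)).toNat / q := by
    intro n hn m hm hlt
    have hn' := Finset.mem_filter.mp hn
    have hm' := Finset.mem_filter.mp hm
    have hnI := Finset.mem_Ioc.mp hn'.1
    have hmI := Finset.mem_Ioc.mp hm'.1
    have hcong : (q : ℤ) ∣ m - n := by
      have : (n : ZMod q) = (m : ZMod q) := hn'.2.trans hm'.2.symm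
      have := (ZMod.intCast_eq_intCast_iff' n m q).mp this
      exact Int.ModEq.dvd this
    have hge : (q : ℤ) ≤ m - n := by
      rcases hcong with ⟨k, hk⟩
      have hk0 : 0 < k := by nlinarith [hq, hlt]
      nlinarith [hq]
    have hx : ((n - ((N : ℤ) + 1)).toNat : ℤ) = n - ((N : ℤ) + 1) :=
      Int.toNat_of_nonneg (by omega)
    have hy : ((m - ((N : ℤ) + 1)).toNat : ℤ) = m - ((N : ℤ) + 1) :=
      Int.toNat_of_nonneg (by omega)
    have hyx : (m - ((N : ℤ) + 1)).toNat ≥ (n - ((N : ℤ) + 1)).toNat + q := by omega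
    calc (n - ((N : ℤ) + 1)).toNat / q
        < (n - ((N : ℤ) + 1)).toNat / q + 1 := Nat.lt_succ_self _
      _ = ((n - ((N : ℤ) + 1)).toNat + q) / q := (Nat.add_div_right _ hq).symm
      _ ≤ (m - ((N : ℤ) + 1)).toNat / q := Nat.div_le_div_right hyx
  have maps : ∀ n ∈ F, (n - ((N : ℤ) + 1)).toNat / q ∈ Finset.range (N / q + 1) := by
    intro n hn
    have hn' := Finset.mem_filter.mp hn
    have hnI := Finset.mem_Ioc.mp hn'.1
    have h1 : (n - ((N : ℤ) + 1)).toNat ≤ N := by omega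
    have := Nat.div_le_div_right (c := q) h1
    simp only [Finset.mem_range]
    omega
  have hinj : Set.InjOn (fun n : ℤ => (n - ((N : ℤ) + 1)).toNat / q) F := by
    intro n hn m hm h
    by_contra hne
    rcases lt_or_gt_of_ne hne with hlt | hlt
    · exact absurd h (Nat.ne_of_lt (key n hn m hm hlt))
    · exact absurd h.symm (Nat.ne_of_lt (key m hm n hn hlt))
  simpa using Finset.card_le_card_of_injOn _ maps hinj

/-- Large-sieve type bound: if `α : ℤ → ℂ` is supported on `N < n ≤ 2N`, then
`∑_{χ mod q} |∑_n α(n) χ(n)|² ≤ (N + q) ∑_n |α(n)|²`. -/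
theorem dirichlet_mean_square_le (q N : ℕ) (hq : 0 < q) (hN : 0 < N) [NeZero q]
    (α : ℤ → ℂ) (hsupp : ∀ n : ℤ, α n ≠ 0 → n ∈ Finset.Ioc (N : ℤ) (2 * N)) :
    ∑ χ : DirichletCharacter ℂ q,
        ‖∑ n ∈ Finset.Ioc (N : ℤ) (2 * N), α n * χ (n : ZMod q)‖ ^ 2
      ≤ ((N : ℝ) + q) * ∑ n ∈ Finset.Ioc (N : ℤ) (2 * N), ‖α n‖ ^ 2 := by
  classical
  set S := Finset.Ioc (N : ℤ) (2 * N) with hS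
  set T : ZMod q → ℂ := fun a => ∑ n ∈ S.filter (fun n : ℤ => (n : ZMod q) = a), α n with hT
  -- Step A: group the inner sum by residue classes
  have stepA : ∀ χ : DirichletCharacter ℂ q,
      ∑ n ∈ S, α n * χ (n : ZMod q) = ∑ a : ZMod q, T a * χ a := by
    intro χ
    rw [← Finset.sum_fiberwise_of_maps_to (g := fun n : ℤ => (n : ZMod q))
      (fun n _ => Finset.mem_univ _) (fun n => α n * χ (n : ZMod q))]
    refine Finset.sum_congr rfl fun a _ => ?_
    rw [hT, Finset.sum_mul]
    exact Finset.sum_congr rfl fun n hn => by rw [(Finset.mem_filter.mp hn).2]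
  -- orthogonality
  have orth : ∀ a b : ZMod q,
      ∑ χ : DirichletCharacter ℂ q, χ a * (starRingEnd ℂ) (χ b) =
        if a = b ∧ IsUnit b then (q.totient : ℂ) else 0 := by
    intro a b
    by_cases hb : IsUnit b
    · have hconj : ∀ χ : DirichletCharacter ℂ q, (starRingEnd ℂ) (χ b) = χ b⁻¹ := by
        intro χ
        have h1 : (starRingEnd ℂ) (χ b) = χ⁻¹ b := MulChar.star_apply' χ b
        rw [h1, MulChar.inv_apply]
        congr 1
        obtain ⟨u, rfl⟩ := hb
        rw [Ring.inverse_unit, ZMod.inv_coe_unit]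
      calc ∑ χ : DirichletCharacter ℂ q, χ a * (starRingEnd ℂ) (χ b)
          = ∑ χ : DirichletCharacter ℂ q, χ b⁻¹ * χ a := by
            refine Finset.sum_congr rfl fun χ _ => ?_
            rw [hconj χ, mul_comm]
        _ = if b = a then (q.totient : ℂ) else 0 :=
            DirichletCharacter.sum_char_inv_mul_char_eq ℂ hb a
        _ = if a = b ∧ IsUnit b then (q.totient : ℂ) else 0 := by
            simp [eq_comm, hb]
    · simp only [MulChar.map_nonunit _ hb, map_zero, mul_zero, Finset.sum_const_zero]
      simp [hb]
  -- Step B: the mean-square identity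
  have stepB : (∑ χ : DirichletCharacter ℂ q, (‖∑ a : ZMod q, T a * χ a‖ ^ 2 : ℂ))
      = (q.totient : ℂ) * ∑ a ∈ Finset.univ.filter (fun a : ZMod q => IsUnit a),
          (‖T a‖ ^ 2 : ℂ) := by
    have e1 : ∀ χ : DirichletCharacter ℂ q,
        (‖∑ a : ZMod q, T a * χ a‖ ^ 2 : ℂ)
          = ∑ a : ZMod q, ∑ b : ZMod q,
              (T a * (starRingEnd ℂ) (T b)) * (χ a * (starRingEnd ℂ) (χ b)) := by
      intro χ
      rw [← Complex.mul_conj', map_sum, Finset.sum_mul_sum]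
      exact Finset.sum_congr rfl fun a _ => Finset.sum_congr rfl fun b _ => by
        rw [map_mul]; ring
    calc (∑ χ : DirichletCharacter ℂ q, (‖∑ a : ZMod q, T a * χ a‖ ^ 2 : ℂ))
        = ∑ a : ZMod q, ∑ b : ZMod q, (T a * (starRingEnd ℂ) (T b))
            * ∑ χ : DirichletCharacter ℂ q, χ a * (starRingEnd ℂ) (χ b) := by
          rw [Finset.sum_congr rfl fun χ _ => e1 χ, Finset.sum_comm]
          refine Finset.sum_congr rfl fun a _ => ?_
          rw [Finset.sum_comm]
          exact Finset.sum_congr rfl fun b _ => by rw [Finset.mul_sum]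
      _ = ∑ a : ZMod q, ∑ b : ZMod q, (T a * (starRingEnd ℂ) (T b))
            * if a = b ∧ IsUnit b then (q.totient : ℂ) else 0 := by
          exact Finset.sum_congr rfl fun a _ => Finset.sum_congr rfl fun b _ => by
            rw [orth a b]
      _ = ∑ a : ZMod q, if IsUnit a then T a * (starRingEnd ℂ) (T a) * (q.totient : ℂ)
            else 0 := by
          refine Finset.sum_congr rfl fun a _ => ?_
          simp only [mul_ite, mul_zero, ite_and]
          rw [Finset.sum_ite_eq]
          simp
      _ = (q.totient : ℂ) * ∑ a ∈ Finset.univ.filter (fun a : ZMod q => IsUnit a),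
            (‖T a‖ ^ 2 : ℂ) := by
          rw [← Finset.sum_filter, Finset.mul_sum]
          exact Finset.sum_congr rfl fun a _ => by
            rw [Complex.mul_conj']; ring
  -- turn Step B into a real identity
  have stepB' : (∑ χ : DirichletCharacter ℂ q, ‖∑ a : ZMod q, T a * χ a‖ ^ 2)
      = (q.totient : ℝ) * ∑ a ∈ Finset.univ.filter (fun a : ZMod q => IsUnit a),
          ‖T a‖ ^ 2 := by
    have := stepB
    rw [← Complex.ofReal_inj]
    push_cast
    convert this using 2 <;> push_cast <;> ring
  -- Cauchy-Schwarz + counting on each residue class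
  have CS : ∀ a : ZMod q, (q.totient : ℝ) * ‖T a‖ ^ 2
      ≤ ((N : ℝ) + q) * ∑ n ∈ S.filter (fun n : ℤ => (n : ZMod q) = a), ‖α n‖ ^ 2 := by
    intro a
    set F := S.filter (fun n : ℤ => (n : ZMod q) = a) with hFdef
    have h1 : ‖T a‖ ≤ ∑ n ∈ F, ‖α n‖ := norm_sum_le _ _
    have h2 : ‖T a‖ ^ 2 ≤ (F.card : ℝ) * ∑ n ∈ F, ‖α n‖ ^ 2 := by
      calc ‖T a‖ ^ 2 ≤ (∑ n ∈ F, ‖α n‖) ^ 2 := by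
            exact pow_le_pow_left₀ (norm_nonneg _) h1 2
        _ ≤ (F.card : ℝ) * ∑ n ∈ F, ‖α n‖ ^ 2 := sq_sum_le_card_mul_sum_sq
    have h3 : (q.totient : ℝ) * (F.card : ℝ) ≤ (N : ℝ) + q := by
      have hc : F.card ≤ N / q + 1 := residue_count_le q N hq a
      have hnat : q.totient * F.card ≤ N + q := by
        calc q.totient * F.card ≤ q.totient * (N / q + 1) :=
              Nat.mul_le_mul_left _ hc
          _ ≤ q * (N / q) + q.totient := by
              rw [Nat.mul_add, Nat.mul_one]
              exact Nat.add_le_add (Nat.mul_le_mul_right _ (Nat.totient_le q)) le_rfl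
          _ ≤ N + q := Nat.add_le_add
              (by rw [Nat.mul_comm]; exact Nat.div_mul_le_self N q) (Nat.totient_le q)
      exact_mod_cast hnat
    have hsum_nonneg : (0 : ℝ) ≤ ∑ n ∈ F, ‖α n‖ ^ 2 :=
      Finset.sum_nonneg fun n _ => by positivity
    calc (q.totient : ℝ) * ‖T a‖ ^ 2
        ≤ (q.totient : ℝ) * ((F.card : ℝ) * ∑ n ∈ F, ‖α n‖ ^ 2) := by
          exact mul_le_mul_of_nonneg_left h2 (by positivity)
      _ = ((q.totient : ℝ) * (F.card : ℝ)) * ∑ n ∈ F, ‖α n‖ ^ 2 := by ring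
      _ ≤ ((N : ℝ) + q) * ∑ n ∈ F, ‖α n‖ ^ 2 :=
          mul_le_mul_of_nonneg_right h3 hsum_nonneg
  -- put everything together
  calc ∑ χ : DirichletCharacter ℂ q, ‖∑ n ∈ S, α n * χ (n : ZMod q)‖ ^ 2
      = ∑ χ : DirichletCharacter ℂ q, ‖∑ a : ZMod q, T a * χ a‖ ^ 2 := by
        exact Finset.sum_congr rfl fun χ _ => by rw [stepA χ]
    _ = (q.totient : ℝ) * ∑ a ∈ Finset.univ.filter (fun a : ZMod q => IsUnit a),
          ‖T a‖ ^ 2 := stepB'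
    _ = ∑ a ∈ Finset.univ.filter (fun a : ZMod q => IsUnit a),
          (q.totient : ℝ) * ‖T a‖ ^ 2 := Finset.mul_sum _ _ _
    _ ≤ ∑ a ∈ Finset.univ.filter (fun a : ZMod q => IsUnit a),
          ((N : ℝ) + q) * ∑ n ∈ S.filter (fun n : ℤ => (n : ZMod q) = a), ‖α n‖ ^ 2 :=
        Finset.sum_le_sum fun a _ => CS a
    _ ≤ ∑ a : ZMod q,
          ((N : ℝ) + q) * ∑ n ∈ S.filter (fun n : ℤ => (n : ZMod q) = a), ‖α n‖ ^ 2 := by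
        refine Finset.sum_le_sum_of_subset_of_nonneg (Finset.filter_subset _ _)
          fun a _ _ => ?_
        have : (0 : ℝ) ≤ ∑ n ∈ S.filter (fun n : ℤ => (n : ZMod q) = a), ‖α n‖ ^ 2 :=
          Finset.sum_nonneg fun n _ => by positivity
        positivity
    _ = ((N : ℝ) + q) * ∑ n ∈ S, ‖α n‖ ^ 2 := by
        rw [← Finset.mul_sum]
        congr 1
        exact Finset.sum_fiberwise_of_maps_to (fun n _ => Finset.mem_univ _) _
end

section
/- Define the map A on triples of real numbers with κ > −1 by A(κ, λ, ν) = (κ/(2(κ+1)), (κ+λ+1)/(2(κ+1)), κ/(2(κ+1))). For every integer k ≥ 2, applying A exactly (k−1) times to the triple (1/2, 1/2, 1) yields the triple (1/(2^{k+1} − 2), 1 − k/(2^{k+1} − 2), 1/(2^{k+1} − 2)). -/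
/-- The `A`-process on arithmetic exponent pairs. -/
noncomputable def Amap : ℝ × ℝ × ℝ → ℝ × ℝ × ℝ :=
  fun p => (p.1 / (2 * (p.1 + 1)), (p.1 + p.2.1 + 1) / (2 * (p.1 + 1)), p.1 / (2 * (p.1 + 1)))

/-- Applying `A` exactly `k−1` times to `(1/2, 1/2, 1)` yields
`(1/(2^{k+1}−2), 1 − k/(2^{k+1}−2), 1/(2^{k+1}−2))` for every `k ≥ 2`. -/
theorem Amap_iterate (k : ℕ) (hk : 2 ≤ k) :
    Amap^[k - 1] ((1/2 : ℝ), (1/2 : ℝ), (1 : ℝ))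
      = (1 / ((2 : ℝ) ^ (k + 1) - 2), 1 - (k : ℝ) / ((2 : ℝ) ^ (k + 1) - 2),
          1 / ((2 : ℝ) ^ (k + 1) - 2)) := by
  induction k, hk using Nat.le_induction with
  | base =>
    norm_num [Amap]
  | succ n hn ih =>
    have hn1 : n + 1 - 1 = (n - 1) + 1 := by omega
    rw [hn1, Function.iterate_succ_apply', ih]
    have hpow : (2:ℝ) ^ (n + 1 + 1) = 2 * 2 ^ (n + 1) := by ring
    have h2 : (2:ℝ) ^ (n + 1) ≥ 8 := by
      calc (2:ℝ)^(n+1) ≥ 2^3 := by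
            apply pow_le_pow_right₀ (by norm_num); omega
        _ = 8 := by norm_num
    rw [hpow]
    generalize (2:ℝ) ^ (n + 1) = t at h2 ⊢
    have ht : t - 2 ≠ 0 := by nlinarith
    have h1 : (1:ℝ) / (t - 2) + 1 ≠ 0 := by
      have hp : (0:ℝ) < 1 / (t - 2) := by
        apply div_pos one_pos; nlinarith
      nlinarith
    have ht2 : (-2 + t * 2) ≠ 0 := by nlinarith
    simp only [Amap]
    push_cast
    refine Prod.ext ?_ (Prod.ext ?_ ?_)
    · simp only
      field_simp [ht2]
      ring
    · simp only
      field_simp [ht2]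
      rw [show (1 + (t - 2) : ℝ) = t - 1 by ring, div_eq_iff (show (t - 1 : ℝ) ≠ 0 by linarith), sub_mul, div_mul_cancel₀ _ (show (t - 1 : ℝ) ≠ 0 by linarith)]; ring
    · simp only
      field_simp [ht2]
      ring
end
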